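/- (At most one faulty neighbouring predecessor, own predecessor correct.) Assume ϑκ ≤ Λ − d. Let H be a hardware clock. Let t_own ∈ ℝ, r_own ∈ [t_own + d − u, t_own + d], and H_own := H(r_own). Let W be a nonempty finite index set with pulse times (t_w)_{w∈W} and reception times r_w ∈ [t_w + d − u, t_w + d], and let S := {H(r_w) : w ∈ W} ∪ F, where F is either empty or a singleton {h} for an arbitrary real h (the faulty neighbour's message). Set H_min := min S, H_max := max S, and let t_min and t_max be the minimum and maximum of {t_w : w ∈ W} ∪ {t_own} (pulse times of all correct predecessors, including the own predecessor). Let C be the algorithm correction computed from (H_own, H_min, H_max), and let t_pulse be the unique real with H(t_pulse) = H_own + Λ − d − C. Then t_min + Λ − 2κ ≤ t_pulse ≤ t_max + Λ. -/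

import Mathlib

/-- Lemma `fault_neighbor`: the own predecessor is correct and at
most one neighbouring predecessor (whose message arrives at the arbitrary local
time carried by `fault`, if present) is faulty. -/
theorem stmt15
    (ϑ u d Λ κ : ℝ)
    (hϑ : 1 < ϑ) (hu : 0 ≤ u) (hd : u ≤ d) (hΛ : d < Λ)
    (hκ : κ = 2 * (u + (1 - 1/ϑ) * (Λ - d)))
    (hϑκ : ϑ*κ ≤ Λ - d)
    (H : ℝ → ℝ)
    (hH : ∀ t t' : ℝ, t ≤ t' → t' - t ≤ H t' - H t ∧ H t' - H t ≤ ϑ * (t' - t))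
    (town rown : ℝ)
    (hrown : town + d - u ≤ rown ∧ rown ≤ town + d)
    (Hown : ℝ) (hHown : Hown = H rown)
    {ι : Type*} [Fintype ι] [Nonempty ι]
    (tw r : ι → ℝ)
    (hr : ∀ w : ι, tw w + d - u ≤ r w ∧ r w ≤ tw w + d)
    (fault : Option ℝ)
    (Hmin Hmax : ℝ)
    (hHmin : Hmin = fault.elim (⨅ w : ι, H (r w)) (fun h => min (⨅ w : ι, H (r w)) h))
    (hHmax : Hmax = fault.elim (⨆ w : ι, H (r w)) (fun h => max (⨆ w : ι, H (r w)) h))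
    (tmin tmax : ℝ)
    (htmin : tmin = min (⨅ w : ι, tw w) town)
    (htmax : tmax = max (⨆ w : ι, tw w) town)
    (Δ : ℝ)
    (hΔ : IsLeast {x : ℝ | ∃ s : ℕ,
      x = max (Hown - Hmax + 4*(s:ℝ)*κ) (Hown - Hmin - 4*(s:ℝ)*κ)} (Δ + κ/2))
    (C : ℝ)
    (hC1 : 0 ≤ Δ → Δ ≤ ϑ*κ → C = Δ)
    (hC2 : Δ < 0 → C = min (Hown - Hmin + 3*κ/2) 0)
    (hC3 : ϑ*κ < Δ → C = max (Hown - Hmax - 3*κ/2) (ϑ*κ))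
    (tpulse : ℝ) (hpulse : H tpulse = Hown + Λ - d - C) :
    tmin + Λ - 2*κ ≤ tpulse ∧ tpulse ≤ tmax + Λ := by
  have hθ0 : (0:ℝ) < ϑ := lt_trans one_pos hϑ
  have hθne : ϑ ≠ 0 := ne_of_gt hθ0
  have h1θ : 1/ϑ < 1 := by rw [div_lt_one hθ0]; exact hϑ
  have hκ0 : 0 < κ := by
    have h2 : 0 < (1 - 1/ϑ) * (Λ - d) := mul_pos (by linarith) (by linarith)
    rw [hκ]; linarith
  have hϑκ0 : 0 ≤ ϑ * κ := le_of_lt (mul_pos hθ0 hκ0)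
  have hkey : ϑ * (Λ - d - κ/2 + u) = Λ - d := by
    rw [hκ]; field_simp; ring
  have mono : ∀ a b : ℝ, H a ≤ H b → a ≤ b := by
    intro a b hab
    by_contra hc
    push_neg at hc
    have := (hH b a hc.le).1
    linarith
  have hmin : ∀ w : ι, Hmin ≤ H (r w) := by
    intro w
    have hi : (⨅ w : ι, H (r w)) ≤ H (r w) :=
      ciInf_le (f := fun w : ι => H (r w)) ((Set.finite_range _).bddBelow) w
    cases fault with
    | none => rw [hHmin]; exact hi
    | some h => rw [hHmin]; exact le_trans (min_le_left _ _) hi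
  have hmax : ∀ w : ι, H (r w) ≤ Hmax := by
    intro w
    have hi : H (r w) ≤ (⨆ w : ι, H (r w)) :=
      le_ciSup (f := fun w : ι => H (r w)) ((Set.finite_range _).bddAbove) w
    cases fault with
    | none => rw [hHmax]; exact hi
    | some h => rw [hHmax]; exact le_trans hi (le_max_left _ _)
  have htmin_own : tmin ≤ town := by rw [htmin]; exact min_le_right _ _
  have htmin_w : ∀ w : ι, tmin ≤ tw w := by
    intro w
    rw [htmin]
    exact le_trans (min_le_left _ _) (ciInf_le ((Set.finite_range _).bddBelow) w)
  have htmax_own : town ≤ tmax := by rw [htmax]; exact le_max_right _ _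
  have htmax_w : ∀ w : ι, tw w ≤ tmax := by
    intro w
    rw [htmax]
    exact le_trans (le_ciSup ((Set.finite_range _).bddAbove) w) (le_max_left _ _)
  have hpe : H tpulse - H rown = Λ - d - C := by rw [hpulse, hHown]; ring
  -- upper bound via the own predecessor, valid whenever 0 ≤ C
  have upper_own : 0 ≤ C → tpulse ≤ tmax + Λ := by
    intro hC
    rcases le_or_gt tpulse rown with h | h
    · linarith [hrown.2]
    · have := (hH rown tpulse h.le).1
      linarith [hrown.2]
  -- lower bound via the own predecessor, valid whenever C ≤ ϑκ
  have lower_own : C ≤ ϑ*κ → tmin + Λ - 2*κ ≤ tpulse := by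
    intro hC
    have hro : rown ≤ tpulse := mono rown tpulse (by linarith)
    have h2 := (hH rown tpulse hro).2
    have hdiv : ϑ * (Λ - d - κ/2 + u - κ) ≤ ϑ * (tpulse - rown) := by
      nlinarith [hkey]
    have hx := (mul_le_mul_iff_right₀ hθ0).mp hdiv
    linarith [hrown.1]
  -- lower bound via a correct neighbour, when C = Hown - Hmax - 3κ/2
  have lower_far : C = Hown - Hmax - 3*κ/2 → tmin + Λ - 2*κ ≤ tpulse := by
    intro hC
    obtain ⟨w⟩ := (inferInstance : Nonempty ι)
    rw [hC] at hpe
    have h1 : H (r w) + (Λ - d) + 3*κ/2 ≤ H tpulse := by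
      have := hmax w; linarith
    have hro : r w ≤ tpulse := mono _ _ (by linarith)
    have h2 := (hH (r w) tpulse hro).2
    have hdiv : ϑ * (Λ - d - κ/2 + u) ≤ ϑ * (tpulse - r w) := by
      nlinarith [hkey]
    have hx := (mul_le_mul_iff_right₀ hθ0).mp hdiv
    linarith [(hr w).1, htmin_w w]
  -- upper bound via a correct neighbour, when C = Hown - Hmin + 3κ/2
  have upper_far : C = Hown - Hmin + 3*κ/2 → tpulse ≤ tmax + Λ := by
    intro hC
    obtain ⟨w⟩ := (inferInstance : Nonempty ι)
    rw [hC] at hpe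
    have h1 : H tpulse ≤ H (r w) + (Λ - d) - 3*κ/2 := by
      have := hmin w; linarith
    rcases le_or_gt tpulse (r w) with h | h
    · linarith [(hr w).2, htmax_w w]
    · have := (hH (r w) tpulse h.le).1
      linarith [(hr w).2, htmax_w w]
  rcases lt_or_ge Δ 0 with hlt | hge
  · have hC := hC2 hlt
    refine ⟨lower_own ?_, ?_⟩
    · rw [hC]; exact le_trans (min_le_right _ _) hϑκ0
    · rcases le_total (Hown - Hmin + 3*κ/2) 0 with h | h
      · exact upper_far (by rw [hC, min_eq_left h])
      · exact upper_own (by rw [hC, min_eq_right h])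
  · rcases le_or_gt Δ (ϑ*κ) with hle' | hgt
    · have hC := hC1 hge hle'
      exact ⟨lower_own (by rw [hC]; exact hle'), upper_own (by rw [hC]; exact hge)⟩
    · have hC := hC3 hgt
      refine ⟨?_, upper_own ?_⟩
      · rcases le_total (Hown - Hmax - 3*κ/2) (ϑ*κ) with h | h
        · exact lower_own (by rw [hC, max_eq_right h])
        · exact lower_far (by rw [hC, max_eq_left h])
      · rw [hC]; exact le_trans hϑκ0 (le_max_right _ _)
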